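/- A k-peg Hanoi group G is contracting if and only if its prenucleus is finite; in that case the prenucleus equals the nucleus of G. -/

import Mathlib

/-!
Common framework: automorphisms of the rooted tree `X_k^*`, root permutations,
sections, self-similar and contracting groups, Hanoi automorphisms and Hanoi
groups, following Makisumi–Stadnyk–Steinhurst, "Modified Hanoi Towers Groups
and Limit Spaces".

A word `x_n … x_1` over the alphabet `X_k = Fin k` is encoded as the list
`[x_n, …, x_1]`, whose head `x_n` is the first letter, i.e. the letter that a
tree automorphism reads (and permutes) first.
-/

namespace Hanoi

/-- Words over the alphabet `X_k = Fin k`. -/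
abbrev Word (k : ℕ) := List (Fin k)

/-- `e` is an automorphism of the rooted tree `X_k^*`: it fixes the root
(the empty word), preserves word length (levels) and preserves the tree
structure (words sharing an initial segment of length `n` are sent to words
sharing an initial segment of length `n`). -/
def IsTreeAut {k : ℕ} (e : Equiv.Perm (Word k)) : Prop :=
  (∀ w : Word k, (e w).length = w.length) ∧
    ∀ (w v : Word k) (n : ℕ), w.take n = v.take n → (e w).take n = (e v).take n

open Classical in
/-- The root permutation `σ_e` of a tree automorphism `e` (its action on
one-letter words). -/
noncomputable def rootPerm {k : ℕ} (e : Equiv.Perm (Word k)) : Equiv.Perm (Fin k) :=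
  if h : Function.Bijective (fun x : Fin k => ((e [x]).head?.getD x)) then
    Equiv.ofBijective _ h
  else 1

open Classical in
/-- The section `e|_x` of `e` at a letter `x`: the unique automorphism with
`e (x :: w) = σ_e x :: (e|_x) w` for all words `w`. -/
noncomputable def sec {k : ℕ} (e : Equiv.Perm (Word k)) (x : Fin k) : Equiv.Perm (Word k) :=
  if h : Function.Bijective (fun w : Word k => (e (x :: w)).tail) then
    Equiv.ofBijective _ h
  else 1

/-- The section `e|_v` of `e` at a word `v = x_n … x_1`, defined by
`e|_v = (e|_{x_n})|_{x_{n-1} … x_1}`. -/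
noncomputable def secW {k : ℕ} (e : Equiv.Perm (Word k)) : Word k → Equiv.Perm (Word k)
  | [] => e
  | x :: v => secW (sec e x) v

/-- A subgroup of the permutations of `X_k^*` is self-similar if it consists of
tree automorphisms and is closed under taking sections. -/
def IsSelfSimilar {k : ℕ} (G : Subgroup (Equiv.Perm (Word k))) : Prop :=
  (∀ g ∈ G, IsTreeAut g) ∧ ∀ g ∈ G, ∀ x : Fin k, sec g x ∈ G

/-- A self-similar group `G` is contracting if there is a finite subset `N ⊆ G`
such that for every `g ∈ G` all sections of `g` at words of length at least
some `m` lie in `N`. -/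
def IsContracting {k : ℕ} (G : Subgroup (Equiv.Perm (Word k))) : Prop :=
  ∃ N : Set (Equiv.Perm (Word k)), N.Finite ∧ N ⊆ (G : Set (Equiv.Perm (Word k))) ∧
    ∀ g ∈ G, ∃ m : ℕ, ∀ v : Word k, m ≤ v.length → secW g v ∈ N

/-- `N` is the nucleus of `G`: a smallest finite subset of `G` catching all
deep enough sections of every element of `G`. -/
def IsNucleus {k : ℕ} (G : Subgroup (Equiv.Perm (Word k)))
    (N : Set (Equiv.Perm (Word k))) : Prop :=
  (N.Finite ∧ N ⊆ (G : Set (Equiv.Perm (Word k))) ∧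
    ∀ g ∈ G, ∃ m : ℕ, ∀ v : Word k, m ≤ v.length → secW g v ∈ N) ∧
  ∀ N' : Set (Equiv.Perm (Word k)), N'.Finite → N' ⊆ (G : Set (Equiv.Perm (Word k))) →
    (∀ g ∈ G, ∃ m : ℕ, ∀ v : Word k, m ≤ v.length → secW g v ∈ N') → N ⊆ N'

/-- `a` is a Hanoi automorphism with set of inactive pegs `Q`: the section at
each active peg (element of the complement of `Q`) is trivial, the section at
each inactive peg is `a` itself, and the root permutation fixes each inactive
peg. -/
def IsHanoiWith {k : ℕ} (a : Equiv.Perm (Word k)) (Q : Set (Fin k)) : Prop :=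
  IsTreeAut a ∧ (∀ i ∉ Q, sec a i = 1) ∧ (∀ j ∈ Q, sec a j = a) ∧
    ∀ j ∈ Q, rootPerm a j = j

/-- `a` is a `k`-peg Hanoi automorphism. -/
def IsHanoiAut {k : ℕ} (a : Equiv.Perm (Word k)) : Prop := ∃ Q, IsHanoiWith a Q

open Classical in
/-- The set `Q_a` of inactive pegs of a Hanoi automorphism `a`; by convention
`Q_1 = X_k` (for `a ≠ 1` the set of inactive pegs is uniquely determined). -/
noncomputable def inactivePegs {k : ℕ} (a : Equiv.Perm (Word k)) : Set (Fin k) :=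
  if a = 1 then Set.univ
  else if h : ∃ Q, IsHanoiWith a Q then h.choose else ∅

/-- `S_{k,q}`: the set of Hanoi automorphisms over `X_k` with exactly `q`
inactive pegs. -/
noncomputable def hanoiSet (k q : ℕ) : Set (Equiv.Perm (Word k)) :=
  {a | IsHanoiAut a ∧ (inactivePegs a).ncard = q}

/-- `L = [s_n, …, s_1]` is a representation of `g` over the generating set `S`:
each `s_i ∈ S ∪ S⁻¹` and `g = s_n ⋯ s_2 s_1`. -/
def IsRepOf {k : ℕ} (S : Set (Equiv.Perm (Word k))) (L : List (Equiv.Perm (Word k)))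
    (g : Equiv.Perm (Word k)) : Prop :=
  (∀ s ∈ L, s ∈ S ∨ s⁻¹ ∈ S) ∧ L.prod = g

/-- The length `l(g)` of `g` with respect to `S`: the length of a minimal
representation (`0` for the identity). -/
noncomputable def repLength {k : ℕ} (S : Set (Equiv.Perm (Word k)))
    (g : Equiv.Perm (Word k)) : ℕ :=
  sInf {n | ∃ L, IsRepOf S L g ∧ L.length = n}

/-- The essential set of a representation: the intersection of the sets of
inactive pegs of its letters. -/
noncomputable def essSet {k : ℕ} (L : List (Equiv.Perm (Word k))) : Set (Fin k) :=
  ⋂ s ∈ L, inactivePegs s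

/-- The prenucleus of `G`: the set of elements `g ∈ G` with `g|_j = g` for some
letter `j`. -/
noncomputable def preNucleus {k : ℕ} (G : Subgroup (Equiv.Perm (Word k))) :
    Set (Equiv.Perm (Word k)) :=
  {g | g ∈ G ∧ ∃ j : Fin k, sec g j = g}

/-- The underlying function of the Hanoi Towers move `a_{ij}`: it changes the
first occurrence of `i` or `j` in a word by means of the transposition `(i j)`
and leaves the rest of the word unchanged. -/
def hanoiMoveFun {k : ℕ} (i j : Fin k) : Word k → Word k
  | [] => []
  | x :: w => if x = i ∨ x = j then Equiv.swap i j x :: w else x :: hanoiMoveFun i j w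

theorem hanoiMoveFun_involutive {k : ℕ} (i j : Fin k) :
    Function.Involutive (hanoiMoveFun i j) := by
  intro w
  induction w with
  | nil => rfl
  | cons x t ih =>
    by_cases h : x = i ∨ x = j
    · have h2 : Equiv.swap i j x = i ∨ Equiv.swap i j x = j := by
        rcases h with h | h <;> subst h <;> simp
      simp only [hanoiMoveFun, if_pos h, if_pos h2, Equiv.swap_apply_self]
    · simp only [hanoiMoveFun, if_neg h, ih]

/-- The Hanoi Towers move `a_{ij}`, as a permutation of `X_k^*`: its root
permutation is the transposition `(i j)`, its sections at `i` and `j` are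
trivial and all its other sections equal `a_{ij}` itself. -/
def hanoiMove {k : ℕ} (i j : Fin k) : Equiv.Perm (Word k) :=
  (hanoiMoveFun_involutive i j).toPerm

/-- The orbit of the letter `j` under the subgroup of `Sym(X_k)` generated by
the root permutations of the elements of `T`. -/
noncomputable def orbT {k : ℕ} (T : Finset (Equiv.Perm (Word k))) (j : Fin k) : Set (Fin k) :=
  MulAction.orbit (Subgroup.closure ((fun a => rootPerm a) '' (T : Set (Equiv.Perm (Word k))))) j

/-- The set `Fix(T)` of letters fixed by the root permutation of every element
of `T`. -/
noncomputable def fixT {k : ℕ} (T : Finset (Equiv.Perm (Word k))) : Set (Fin k) :=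
  {x | ∀ s ∈ T, rootPerm s x = x}

/-- Condition (*) on a generating set `S` of Hanoi automorphisms: for every
finite `T ⊆ S` with nonempty essential set and every letter `j ∉ Fix(T)`,
the orbit of `j` misses the inactive pegs of some element of `T`. -/
noncomputable def CondStar {k : ℕ} (S : Set (Equiv.Perm (Word k))) : Prop :=
  ∀ T : Finset (Equiv.Perm (Word k)), (T : Set (Equiv.Perm (Word k))) ⊆ S →
    (⋂ s ∈ T, inactivePegs s).Nonempty →
    ∀ j : Fin k, j ∉ fixT T →
      ∃ s ∈ T, orbT T j ∩ inactivePegs s = ∅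

open Classical in
/-- `d(g)`: the least number of distinct generators occurring among all
representations of `g` having nonempty essential set. -/
noncomputable def dCount {k : ℕ} (S : Set (Equiv.Perm (Word k)))
    (g : Equiv.Perm (Word k)) : ℕ :=
  sInf {M | ∃ L, IsRepOf S L g ∧ (essSet L).Nonempty ∧ L.toFinset.card = M}

/-- `S` is fully symmetric: for every non-identity `a ∈ S` and every
`φ ∈ Sym(X_k)`, the Hanoi automorphism `φ·a` with inactive pegs `φ(Q_a)` and
root permutation `φ ∘ σ_a ∘ φ⁻¹` again lies in `S`. -/
noncomputable def FullySymmetric {k : ℕ} (S : Set (Equiv.Perm (Word k))) : Prop :=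
  ∀ a ∈ S, a ≠ 1 → ∀ φ : Equiv.Perm (Fin k), ∀ b : Equiv.Perm (Word k),
    IsHanoiWith b (φ '' inactivePegs a) →
    rootPerm b = φ * rootPerm a * φ⁻¹ → b ∈ S

/-- The family `R̲_{k,n}`: the identity together with all Hanoi automorphisms
`a` such that (1) `Q_a ⊆ {m+1, …, m+n}` for some `m`, and (2) whenever
`i ∈ Q_a` the root permutation of `a` fixes `i-1, …, i-(n-1)`
(all peg labels mod `k`). -/
noncomputable def Runder (k n : ℕ) : Set (Equiv.Perm (Word k)) :=
  {a | a = 1 ∨ (IsHanoiAut a ∧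
    (∃ m : Fin k, ∀ q ∈ inactivePegs a, ∃ t : ℕ, 1 ≤ t ∧ t ≤ n ∧
      (q : ℕ) = ((m : ℕ) + t) % k) ∧
    ∀ i ∈ inactivePegs a, ∀ x : Fin k, ∀ t : ℕ, 1 ≤ t → t ≤ n - 1 →
      ((x : ℕ) + t) % k = (i : ℕ) → rootPerm a x = x)}

/-- The family `R̄_{k,n}`: the identity together with all Hanoi automorphisms
`a` such that (1) `Q_a ⊆ {m+1, …, m+n}` for some `m`, and (2) whenever
`i ∈ Q_a` the root permutation of `a` fixes `i+1, …, i+(n-1)`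
(all peg labels mod `k`). -/
noncomputable def Rover (k n : ℕ) : Set (Equiv.Perm (Word k)) :=
  {a | a = 1 ∨ (IsHanoiAut a ∧
    (∃ m : Fin k, ∀ q ∈ inactivePegs a, ∃ t : ℕ, 1 ≤ t ∧ t ≤ n ∧
      (q : ℕ) = ((m : ℕ) + t) % k) ∧
    ∀ i ∈ inactivePegs a, ∀ x : Fin k, ∀ t : ℕ, 1 ≤ t → t ≤ n - 1 →
      (x : ℕ) = ((i : ℕ) + t) % k → rootPerm a x = x)}

/-- The finite word `x_m … x_1` (first letter `x_m`) read off from a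
left-infinite sequence `… x_2 x_1`, encoded as `x : ℕ → Fin k` with
`x s = x_{s+1}`. -/
def wordOf {k : ℕ} (x : ℕ → Fin k) (m : ℕ) : Word k := (List.range m).reverse.map x

/-! ### Auxiliary development for Statement 6 -/

section Aux

variable {k : ℕ}

lemma IsTreeAut.take_eq {e : Equiv.Perm (Word k)} (he : IsTreeAut e) (n : ℕ) (w : Word k) :
    (e w).take n = e (w.take n) := by
  rcases le_or_gt w.length n with h | h
  · rw [List.take_of_length_le (by rw [he.1]; exact h), List.take_of_length_le h]
  · have h1 : (e w).take n = (e (w.take n)).take n :=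
      he.2 w (w.take n) n (by rw [List.take_take, min_self])
    rw [h1, List.take_of_length_le (by rw [he.1, List.length_take]; exact min_le_left _ _)]

lemma isTreeAut_one : IsTreeAut (1 : Equiv.Perm (Word k)) :=
  ⟨fun _ => rfl, fun _ _ _ h => h⟩

lemma IsTreeAut.mul {g h : Equiv.Perm (Word k)} (hg : IsTreeAut g) (hh : IsTreeAut h) :
    IsTreeAut (g * h) := by
  constructor
  · intro w
    simp only [Equiv.Perm.mul_apply, hg.1, hh.1]
  · intro w v n hwv
    simp only [Equiv.Perm.mul_apply]
    exact hg.2 _ _ n (hh.2 _ _ n hwv)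

lemma IsTreeAut.inv {g : Equiv.Perm (Word k)} (hg : IsTreeAut g) : IsTreeAut g⁻¹ := by
  constructor
  · intro w
    have := hg.1 (g⁻¹ w)
    rw [Equiv.Perm.coe_inv, Equiv.apply_symm_apply] at this
    exact this.symm
  · intro w v n hwv
    apply g.injective
    have h1 : g ((g⁻¹ w).take n) = w.take n := by
      rw [← hg.take_eq, Equiv.Perm.coe_inv, Equiv.apply_symm_apply]
    have h2 : g ((g⁻¹ v).take n) = v.take n := by
      rw [← hg.take_eq, Equiv.Perm.coe_inv, Equiv.apply_symm_apply]
    rw [← hg.take_eq, ← hg.take_eq, Equiv.Perm.coe_inv, Equiv.apply_symm_apply, Equiv.apply_symm_apply]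
    exact hwv

lemma cons_eq_cons' {α : Type*} {a b : α} {l l' : List α} (h : a :: l = b :: l') :
    a = b ∧ l = l' := by simpa using h

lemma rootPerm_spec {e : Equiv.Perm (Word k)} (he : IsTreeAut e) (x : Fin k) :
    e [x] = [rootPerm e x] := by
  have key : ∀ y : Fin k, e [y] = [(e [y]).head?.getD y] := by
    intro y
    obtain ⟨c, hc⟩ := List.length_eq_one_iff.mp (he.1 [y])
    simp [hc]
  have hinj : Function.Injective (fun y : Fin k => (e [y]).head?.getD y) := by
    intro a b hab
    have : e [a] = e [b] := by rw [key a, key b]; exact congrArg (fun c => [c]) hab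
    simpa using e.injective this
  have hbij : Function.Bijective (fun y : Fin k => (e [y]).head?.getD y) :=
    Finite.injective_iff_bijective.mp hinj
  simp only [rootPerm, dif_pos hbij, Equiv.ofBijective_apply]
  exact key x

lemma sec_spec {e : Equiv.Perm (Word k)} (he : IsTreeAut e) (x : Fin k) (w : Word k) :
    e (x :: w) = rootPerm e x :: sec e x w := by
  have partial_eq : ∀ u : Word k, e (x :: u) = rootPerm e x :: (e (x :: u)).tail := by
    intro u
    have hlen : (e (x :: u)).length = u.length + 1 := he.1 (x :: u)
    obtain ⟨c, t, hct⟩ : ∃ c t, e (x :: u) = c :: t := by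
      cases h : e (x :: u) with
      | nil => rw [h] at hlen; simp at hlen
      | cons c t => exact ⟨c, t, rfl⟩
    have htake : (e (x :: u)).take 1 = [rootPerm e x] := by
      rw [he.take_eq 1 (x :: u)]
      show e [x] = _
      exact rootPerm_spec he x
    rw [hct] at htake ⊢
    simp only [List.take_succ_cons, List.take_zero] at htake
    rw [List.tail_cons, (cons_eq_cons' htake).1]
  have hbij : Function.Bijective (fun u : Word k => (e (x :: u)).tail) := by
    constructor
    · intro a b hab
      simp only at hab
      have : e (x :: a) = e (x :: b) := by
        rw [partial_eq a, partial_eq b, hab]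
      simpa using e.injective this
    · intro u
      set z := e⁻¹ (rootPerm e x :: u) with hz
      have hez : e z = rootPerm e x :: u := Equiv.apply_symm_apply e _
      have hzlen : z.length = u.length + 1 := by
        have := he.1 z
        rw [hez] at this
        simpa using this.symm
      obtain ⟨y, w', hyw⟩ : ∃ y w', z = y :: w' := by
        cases h : z with
        | nil => rw [h] at hzlen; simp at hzlen
        | cons y w' => exact ⟨y, w', rfl⟩
      have hey : e (y :: w') = rootPerm e x :: u := by rw [← hyw]; exact hez
      have hyx : y = x := by
        have h1 : (e (y :: w')).take 1 = [rootPerm e x] := by rw [hey]; rfl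
        rw [he.take_eq 1 (y :: w')] at h1
        have h2 : e [y] = [rootPerm e x] := h1
        have h3 : e [y] = e [x] := by rw [h2, rootPerm_spec he x]
        simpa using e.injective h3
      refine ⟨w', ?_⟩
      show (e (x :: w')).tail = u
      rw [← hyx, hey, List.tail_cons]
  simp only [sec, dif_pos hbij, Equiv.ofBijective_apply]
  exact partial_eq w

lemma rootPerm_one : rootPerm (1 : Equiv.Perm (Word k)) = 1 := by
  apply Equiv.ext
  intro x
  have := rootPerm_spec (k := k) isTreeAut_one x
  simp only [Equiv.Perm.one_apply] at this ⊢
  exact (cons_eq_cons' this.symm).1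

lemma sec_one (x : Fin k) : sec (1 : Equiv.Perm (Word k)) x = 1 := by
  apply Equiv.ext
  intro w
  have := sec_spec (k := k) isTreeAut_one x w
  simp only [Equiv.Perm.one_apply] at this ⊢
  exact ((cons_eq_cons' this).2).symm

lemma rootPerm_mul {g h : Equiv.Perm (Word k)} (hg : IsTreeAut g) (hh : IsTreeAut h)
    (x : Fin k) : rootPerm (g * h) x = rootPerm g (rootPerm h x) := by
  have h1 : (g * h) [x] = [rootPerm (g * h) x] := rootPerm_spec (hg.mul hh) x
  have h2 : (g * h) [x] = [rootPerm g (rootPerm h x)] := by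
    rw [Equiv.Perm.mul_apply, rootPerm_spec hh x, rootPerm_spec hg]
  rw [h2] at h1
  exact (cons_eq_cons' h1.symm).1

lemma sec_mul {g h : Equiv.Perm (Word k)} (hg : IsTreeAut g) (hh : IsTreeAut h)
    (x : Fin k) : sec (g * h) x = sec g (rootPerm h x) * sec h x := by
  apply Equiv.ext
  intro w
  have h1 : (g * h) (x :: w) = rootPerm (g * h) x :: sec (g * h) x w :=
    sec_spec (hg.mul hh) x w
  have h2 : (g * h) (x :: w) =
      rootPerm g (rootPerm h x) :: sec g (rootPerm h x) (sec h x w) := by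
    rw [Equiv.Perm.mul_apply, sec_spec hh x w, sec_spec hg]
  rw [h2] at h1
  exact ((cons_eq_cons' h1).2).symm

lemma rootPerm_inv_fix {g : Equiv.Perm (Word k)} (hg : IsTreeAut g) {j : Fin k}
    (hj : rootPerm g j = j) : rootPerm g⁻¹ j = j := by
  have h1 : rootPerm g (rootPerm g⁻¹ j) = j := by
    have := rootPerm_mul hg hg.inv j
    rw [mul_inv_cancel, rootPerm_one, Equiv.Perm.one_apply] at this
    exact this.symm
  exact ((rootPerm g).injective (hj.symm ▸ h1 : rootPerm g (rootPerm g⁻¹ j) = rootPerm g j))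

lemma sec_inv {g : Equiv.Perm (Word k)} (hg : IsTreeAut g) (x : Fin k) :
    sec g⁻¹ x = (sec g (rootPerm g⁻¹ x))⁻¹ := by
  have h1 := sec_mul hg hg.inv x
  rw [mul_inv_cancel, sec_one] at h1
  exact eq_inv_of_mul_eq_one_right h1.symm

lemma IsHanoiWith.inv {a : Equiv.Perm (Word k)} {Q : Set (Fin k)}
    (h : IsHanoiWith a Q) : IsHanoiWith a⁻¹ Q := by
  obtain ⟨hta, hP, hQ, hfix⟩ := h
  have hinvfix : ∀ j ∈ Q, rootPerm a⁻¹ j = j := fun j hj =>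
    rootPerm_inv_fix hta (hfix j hj)
  refine ⟨hta.inv, ?_, ?_, hinvfix⟩
  · intro i hi
    rw [sec_inv hta]
    have hy : rootPerm a⁻¹ i ∉ Q := by
      intro hmem
      have h1 : rootPerm a (rootPerm a⁻¹ i) = rootPerm a⁻¹ i := hfix _ hmem
      have h2 : rootPerm a (rootPerm a⁻¹ i) = i := by
        have := rootPerm_mul hta hta.inv i
        rw [mul_inv_cancel, rootPerm_one, Equiv.Perm.one_apply] at this
        exact this.symm
      rw [h2] at h1
      exact hi (h1 ▸ hmem)
    rw [hP _ hy, inv_one]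
  · intro j hj
    rw [sec_inv hta, hinvfix j hj, hQ j hj]

/-- Pairs of a Hanoi automorphism and a witnessing set of inactive pegs. -/
abbrev PPair (k : ℕ) := Equiv.Perm (Word k) × Set (Fin k)

/-- A list of pairs, each consisting of a Hanoi automorphism (with witnessing
inactive pegs) belonging to `G`. -/
def GoodL (G : Subgroup (Equiv.Perm (Word k))) (L : List (PPair k)) : Prop :=
  ∀ p ∈ L, IsHanoiWith p.1 p.2 ∧ p.1 ∈ G

/-- Product of the first components. -/
noncomputable def prodL (L : List (PPair k)) : Equiv.Perm (Word k) :=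
  (L.map Prod.fst).prod

@[simp] lemma prodL_nil : prodL ([] : List (PPair k)) = 1 := rfl

@[simp] lemma prodL_cons (p : PPair k) (L : List (PPair k)) :
    prodL (p :: L) = p.1 * prodL L := by
  simp [prodL]

lemma GoodL.tail {G : Subgroup (Equiv.Perm (Word k))} {p : PPair k} {L : List (PPair k)}
    (h : GoodL G (p :: L)) : GoodL G L := fun q hq => h q (List.mem_cons_of_mem _ hq)

lemma GoodL.head {G : Subgroup (Equiv.Perm (Word k))} {p : PPair k} {L : List (PPair k)}
    (h : GoodL G (p :: L)) : IsHanoiWith p.1 p.2 ∧ p.1 ∈ G := h p (List.mem_cons_self)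

lemma prodL_treeAut {G : Subgroup (Equiv.Perm (Word k))} {L : List (PPair k)}
    (hL : GoodL G L) : IsTreeAut (prodL L) := by
  induction L with
  | nil => simpa using isTreeAut_one
  | cons p L ih =>
    rw [prodL_cons]
    exact (hL.head.1).1.mul (ih hL.tail)

lemma prodL_mem {G : Subgroup (Equiv.Perm (Word k))} {L : List (PPair k)}
    (hL : GoodL G L) : prodL L ∈ G := by
  induction L with
  | nil => simpa using G.one_mem
  | cons p L ih =>
    rw [prodL_cons]
    exact G.mul_mem hL.head.2 (ih hL.tail)

lemma rootPerm_prodL_fix {G : Subgroup (Equiv.Perm (Word k))} {L : List (PPair k)}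
    (hL : GoodL G L) {j : Fin k} (hj : ∀ p ∈ L, j ∈ p.2) :
    rootPerm (prodL L) j = j := by
  induction L with
  | nil => simp [rootPerm_one]
  | cons p L ih =>
    rw [prodL_cons, rootPerm_mul (hL.head.1).1 (prodL_treeAut hL.tail),
      ih hL.tail (fun q hq => hj q (List.mem_cons_of_mem _ hq))]
    exact (hL.head.1).2.2.2 j (hj p (List.mem_cons_self))

lemma sec_prodL_fix {G : Subgroup (Equiv.Perm (Word k))} {L : List (PPair k)}
    (hL : GoodL G L) {j : Fin k} (hj : ∀ p ∈ L, j ∈ p.2) :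
    sec (prodL L) j = prodL L := by
  induction L with
  | nil => simp [sec_one]
  | cons p L ih =>
    rw [prodL_cons, sec_mul (hL.head.1).1 (prodL_treeAut hL.tail),
      rootPerm_prodL_fix hL.tail (fun q hq => hj q (List.mem_cons_of_mem _ hq)),
      ih hL.tail (fun q hq => hj q (List.mem_cons_of_mem _ hq)),
      (hL.head.1).2.2.1 j (hj p (List.mem_cons_self))]

open Classical in
/-- The list recording which factors survive when taking the section at
letter `x`. -/
noncomputable def secList : List (PPair k) → Fin k → List (PPair k)
  | [], _ => []
  | p :: L, x =>
    if rootPerm (prodL L) x ∈ p.2 then p :: secList L x else secList L x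

lemma secList_sublist (L : List (PPair k)) (x : Fin k) : (secList L x).Sublist L := by
  induction L with
  | nil => simp [secList]
  | cons p L ih =>
    rw [secList]
    split_ifs with h
    · exact ih.cons₂ p
    · exact ih.cons p

lemma sec_prodL {G : Subgroup (Equiv.Perm (Word k))} {L : List (PPair k)}
    (hL : GoodL G L) (x : Fin k) :
    sec (prodL L) x = prodL (secList L x) := by
  induction L with
  | nil => simp [secList, sec_one]
  | cons p L ih =>
    rw [prodL_cons, sec_mul (hL.head.1).1 (prodL_treeAut hL.tail), secList]
    split_ifs with h
    · rw [prodL_cons, (hL.head.1).2.2.1 _ h, ih hL.tail]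
    · rw [(hL.head.1).2.1 _ h, ih hL.tail, one_mul]

lemma secList_eq_self {G : Subgroup (Equiv.Perm (Word k))} {L : List (PPair k)}
    (hL : GoodL G L) {x : Fin k} (h : secList L x = L) : ∀ p ∈ L, x ∈ p.2 := by
  induction L with
  | nil => simp
  | cons p L ih =>
    rw [secList] at h
    split_ifs at h with hc
    · have htail : secList L x = L := by
        exact (cons_eq_cons' h).2
      have hall : ∀ q ∈ L, x ∈ q.2 := ih hL.tail htail
      have hrp : rootPerm (prodL L) x = x := rootPerm_prodL_fix hL.tail hall
      intro q hq
      rcases List.mem_cons.mp hq with rfl | hq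
      · rwa [hrp] at hc
      · exact hall q hq
    · exfalso
      have h1 := (secList_sublist L x).length_le
      rw [h] at h1
      simp at h1

lemma secW_cons (e : Equiv.Perm (Word k)) (x : Fin k) (v : Word k) :
    secW e (x :: v) = secW (sec e x) v := rfl

/-- Core lemma: deep enough sections of a product of Hanoi automorphisms lie
in the prenucleus. -/
lemma secW_prodL_mem_preNucleus {G : Subgroup (Equiv.Perm (Word k))} :
    ∀ (v : Word k) (L : List (PPair k)), GoodL G L →
      (L.length < v.length ∨ {j : Fin k | ∀ p ∈ L, j ∈ p.2}.Nonempty) →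
      secW (prodL L) v ∈ preNucleus G := by
  intro v
  induction v with
  | nil =>
    intro L hL hcond
    rcases hcond with h | ⟨j, hj⟩
    · simp at h
    · exact ⟨prodL_mem hL, j, sec_prodL_fix hL hj⟩
  | cons x v ih =>
    intro L hL hcond
    have hL' : GoodL G (secList L x) :=
      fun p hp => hL p ((secList_sublist L x).mem hp)
    have hsec : secW (prodL L) (x :: v) = secW (prodL (secList L x)) v := by
      rw [secW_cons, sec_prodL hL x]
    rw [hsec]
    by_cases hE : {j : Fin k | ∀ p ∈ L, j ∈ p.2}.Nonempty
    · refine ih (secList L x) hL' (Or.inr ?_)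
      obtain ⟨j, hj⟩ := hE
      exact ⟨j, fun p hp => hj p ((secList_sublist L x).mem hp)⟩
    · have hne : secList L x ≠ L := by
        intro heq
        exact hE ⟨x, secList_eq_self hL heq⟩
      have hlt : (secList L x).length < L.length := by
        rcases lt_or_eq_of_le (secList_sublist L x).length_le with h | h
        · exact h
        · exact absurd ((secList_sublist L x).eq_of_length h) hne
      rcases hcond with h | h
      · refine ih (secList L x) hL' (Or.inl ?_)
        simp only [List.length_cons] at h
        omega
      · exact absurd h hE

/-- Every element of a Hanoi group is a product of a good list. -/
lemma exists_goodL {S : Set (Equiv.Perm (Word k))} (hS : ∀ a ∈ S, IsHanoiAut a)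
    {g : Equiv.Perm (Word k)} (hg : g ∈ Subgroup.closure S) :
    ∃ L : List (PPair k), GoodL (Subgroup.closure S) L ∧ prodL L = g := by
  have build : ∀ l : List (Equiv.Perm (Word k)), (∀ y ∈ l, y ∈ S ∪ S⁻¹) →
      ∃ L : List (PPair k), GoodL (Subgroup.closure S) L ∧ prodL L = l.prod := by
    intro l
    induction l with
    | nil => exact fun _ => ⟨[], by simp [GoodL], by simp⟩
    | cons t l ih =>
      intro hl
      obtain ⟨L, hL, hp⟩ := ih (fun y hy => hl y (List.mem_cons_of_mem _ hy))
      have ht := hl t (List.mem_cons_self)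
      have hQ : ∃ Q, IsHanoiWith t Q ∧ t ∈ Subgroup.closure S := by
        rcases ht with ht | ht
        · obtain ⟨Q, hQ⟩ := hS t ht
          exact ⟨Q, hQ, Subgroup.subset_closure ht⟩
        · have ht' : t⁻¹ ∈ S := Set.mem_inv.mp ht
          obtain ⟨Q, hQ⟩ := hS t⁻¹ ht'
          exact ⟨Q, by simpa using hQ.inv,
            (Subgroup.closure S).inv_mem_iff.mp (Subgroup.subset_closure ht')⟩
      obtain ⟨Q, hQ, htG⟩ := hQ
      refine ⟨(t, Q) :: L, ?_, by simp [hp]⟩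
      intro q hq
      rcases List.mem_cons.mp hq with rfl | hq
      · exact ⟨hQ, htG⟩
      · exact hL q hq
  have hg' : g ∈ (Subgroup.closure S).toSubmonoid := hg
  rw [Subgroup.closure_toSubmonoid] at hg'
  obtain ⟨l, hl, hprod⟩ := Submonoid.exists_list_of_mem_closure hg'
  obtain ⟨L, hL, hp⟩ := build l hl
  exact ⟨L, hL, hp.trans hprod⟩

/-- Lemma A: all deep enough sections of an element lie in the prenucleus. -/
lemma lemA {S : Set (Equiv.Perm (Word k))} (hS : ∀ a ∈ S, IsHanoiAut a) :
    ∀ g ∈ Subgroup.closure S, ∃ m : ℕ, ∀ v : Word k, m ≤ v.length →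
      secW g v ∈ preNucleus (Subgroup.closure S) := by
  intro g hg
  obtain ⟨L, hL, hprod⟩ := exists_goodL hS hg
  refine ⟨L.length + 1, fun v hv => ?_⟩
  rw [← hprod]
  exact secW_prodL_mem_preNucleus v L hL (Or.inl (by omega))

lemma secW_replicate {g : Equiv.Perm (Word k)} {j : Fin k} (h : sec g j = g) (m : ℕ) :
    secW g (List.replicate m j) = g := by
  induction m with
  | zero => rfl
  | succ n ih =>
    rw [List.replicate_succ, secW_cons, h]
    exact ih

/-- Lemma B: the prenucleus is contained in any finite contraction kernel. -/
lemma lemB {G : Subgroup (Equiv.Perm (Word k))} {N' : Set (Equiv.Perm (Word k))}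
    (hprop : ∀ g ∈ G, ∃ m : ℕ, ∀ v : Word k, m ≤ v.length → secW g v ∈ N') :
    preNucleus G ⊆ N' := by
  rintro g ⟨hgG, j, hj⟩
  obtain ⟨m, hm⟩ := hprop g hgG
  have := hm (List.replicate m j) (by simp)
  rwa [secW_replicate hj m] at this

end Aux

/-- Theorem: contraction and the prenucleus.
A `k`-peg Hanoi group `G` is contracting if and only if its prenucleus is
finite; in that case the prenucleus is the nucleus of `G`. -/
theorem contracting_iff_prenucleus_finite {k : ℕ} (S : Set (Equiv.Perm (Word k)))
    (hS1 : (1 : Equiv.Perm (Word k)) ∈ S) (hS : ∀ a ∈ S, IsHanoiAut a) :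
    (IsContracting (Subgroup.closure S) ↔ (preNucleus (Subgroup.closure S)).Finite) ∧
    (IsContracting (Subgroup.closure S) →
      IsNucleus (Subgroup.closure S) (preNucleus (Subgroup.closure S))) := by
  have hsub : preNucleus (Subgroup.closure S) ⊆
      ((Subgroup.closure S : Subgroup (Equiv.Perm (Word k))) :
        Set (Equiv.Perm (Word k))) := fun g hg => hg.1
  have hA := lemA hS
  have hfin : IsContracting (Subgroup.closure S) →
      (preNucleus (Subgroup.closure S)).Finite := by
    rintro ⟨N, hNfin, _, hNprop⟩
    exact hNfin.subset (lemB hNprop)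
  refine ⟨⟨hfin, fun hfin' => ⟨preNucleus (Subgroup.closure S), hfin', hsub, hA⟩⟩, ?_⟩
  intro hc
  exact ⟨⟨hfin hc, hsub, hA⟩, fun N' _ _ hprop => lemB hprop⟩

end Hanoi
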